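/- Let L be any of the logics MN, MNF, MNP, MND, MNPF, MNDF. If a modal formula A is not a theorem of L, then there exist a finite MN-frame (W, ≺) of the corresponding frame class (arbitrary for MN; transitive for MNF; MNP-frame for MNP; MND-frame for MND; transitive MNP-frame for MNPF; transitive MND-frame for MNDF), a satisfaction relation ⊩ on (W, ≺), and a world x ∈ W such that x ⊮ A. -/

import Mathlib

/-- Modal formulas: variables, ⊥, →, □. -/
inductive Fml : Type
  | var : ℕ → Fml
  | bot : Fml
  | imp : Fml → Fml → Fml
  | box : Fml → Fml
  deriving DecidableEq

namespace Fml

/-- ¬A is an abbreviation for A → ⊥. -/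
def neg (A : Fml) : Fml := imp A bot

/-- ⊤ is an abbreviation for ¬⊥. -/
def top : Fml := neg bot

/-- A ∧ B is an abbreviation for ¬(A → ¬B). -/
def and (A B : Fml) : Fml := neg (imp A (neg B))

/-- Uniform substitution. -/
def subst (σ : ℕ → Fml) : Fml → Fml
  | var n => σ n
  | bot => bot
  | imp A B => imp (subst σ A) (subst σ B)
  | box A => box (subst σ A)

end Fml

/-- A formula is a propositional tautology if it is true under every valuation
that respects ⊥ and →, treating variables and boxed formulas as atoms. -/
def IsTautology (A : Fml) : Prop :=
  ∀ val : Fml → Bool,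
    (val Fml.bot = false) →
    (∀ B C : Fml, val (Fml.imp B C) = (!(val B) || val C)) →
    val A = true

/-- Provability in the extension of the logic MN by the axioms in `Ax`:
axioms are all propositional tautologies and the members of `Ax`; the rules
are Modus Ponens, Necessitation, and RM. -/
inductive MNProv (Ax : Fml → Prop) : Fml → Prop
  | taut {A : Fml} : IsTautology A → MNProv Ax A
  | ax {A : Fml} : Ax A → MNProv Ax A
  | mp {A B : Fml} : MNProv Ax (A.imp B) → MNProv Ax A → MNProv Ax B
  | nec {A : Fml} : MNProv Ax A → MNProv Ax A.box
  | rm {A B : Fml} : MNProv Ax (A.imp B) → MNProv Ax (A.box.imp B.box)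

/-- The axiom P : ¬□⊥. -/
def AxP : Fml → Prop := fun A => A = (Fml.box Fml.bot).neg

/-- The axiom scheme D : ¬(□B ∧ □¬B). -/
def AxD : Fml → Prop := fun A => ∃ B : Fml, A = ((B.box).and (B.neg.box)).neg

/-- The axiom scheme 4 : □B → □□B. -/
def AxF : Fml → Prop := fun A => ∃ B : Fml, A = B.box.imp B.box.box

def MN : Fml → Prop := MNProv (fun _ => False)
def MNP : Fml → Prop := MNProv AxP
def MND : Fml → Prop := MNProv AxD
def MNF : Fml → Prop := MNProv AxF
def MNPF : Fml → Prop := MNProv (fun A => AxP A ∨ AxF A)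
def MNDF : Fml → Prop := MNProv (fun A => AxD A ∨ AxF A)

/-- An MN-frame: a nonempty set `W` together with a relation between worlds and
nonempty subsets of `W` satisfying monotonicity. -/
structure MNFrame (W : Type*) where
  nonempty : Nonempty W
  rel : W → Set W → Prop
  rel_nonempty : ∀ (x : W) (V : Set W), rel x V → V.Nonempty
  mono : ∀ (x : W) (V U : Set W), rel x V → V ⊆ U → rel x U

/-- `Sat` is a satisfaction relation on the MN-frame `F`. -/
structure IsSat {W : Type*} (F : MNFrame W) (Sat : W → Fml → Prop) : Prop where
  bot : ∀ x : W, ¬ Sat x Fml.bot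
  imp : ∀ (x : W) (A B : Fml), Sat x (A.imp B) ↔ (Sat x A → Sat x B)
  box : ∀ (x : W) (A : Fml), Sat x A.box ↔ ∀ V : Set W, F.rel x V → ∃ y ∈ V, Sat y A

/-- A formula is valid in an MN-frame if it is satisfied at every world under
every satisfaction relation on the frame. -/
def Valid {W : Type*} (F : MNFrame W) (A : Fml) : Prop :=
  ∀ Sat : W → Fml → Prop, IsSat F Sat → ∀ x : W, Sat x A

/-- Transitivity of an MN-frame. -/
def MNFrame.IsTransitive {W : Type*} (F : MNFrame W) : Prop :=
  ∀ (x : W) (V : Set W) (U : W → Set W),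
    F.rel x V → (∀ y ∈ V, F.rel y (U y)) → F.rel x (⋃ y ∈ V, U y)

/-- MNP-frames: every world is related to some subset. -/
def MNFrame.IsMNP {W : Type*} (F : MNFrame W) : Prop :=
  ∀ x : W, ∃ V : Set W, F.rel x V

/-- MND-frames: every world is related to `V` or to its complement. -/
def MNFrame.IsMND {W : Type*} (F : MNFrame W) : Prop :=
  ∀ (x : W) (V : Set W), F.rel x V ∨ F.rel x Vᶜ


namespace S18

open Fml

abbrev Val := Fml → Bool

/-- A valuation respecting bot and imp. -/
def Resp (val : Val) : Prop :=
  val Fml.bot = false ∧ ∀ B C : Fml, val (Fml.imp B C) = (!(val B) || val C)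

lemma Resp.neg {val : Val} (h : Resp val) (B : Fml) : val B.neg = !(val B) := by
  simp [Fml.neg, h.2, h.1]

lemma Resp.and_ {val : Val} (h : Resp val) (B C : Fml) :
    val (B.and C) = (val B && val C) := by
  simp only [Fml.and, h.neg, h.2]
  cases val B <;> cases val C <;> rfl

lemma Resp.top_ {val : Val} (h : Resp val) : val Fml.top = true := by
  simp [Fml.top, h.neg, h.1]

lemma prv_taut {Ax : Fml → Prop} {A : Fml}
    (h : ∀ val : Val, Resp val → val A = true) : MNProv Ax A :=
  .taut (fun val h0 h1 => h val ⟨h0, h1⟩)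

lemma imp_trans {Ax : Fml → Prop} {A B C : Fml}
    (h1 : MNProv Ax (A.imp B)) (h2 : MNProv Ax (B.imp C)) :
    MNProv Ax (A.imp C) := by
  have t : MNProv Ax ((A.imp B).imp ((B.imp C).imp (A.imp C))) := by
    apply prv_taut; intro val hv
    simp only [hv.2]
    cases val A <;> cases val B <;> cases val C <;> rfl
  exact (t.mp h1).mp h2

lemma prv_imp_self {Ax : Fml → Prop} (A : Fml) : MNProv Ax (A.imp A) := by
  apply prv_taut; intro val hv; simp only [hv.2]; cases val A <;> rfl

lemma imp_of_neg {Ax : Fml → Prop} {A B : Fml} (h : MNProv Ax A.neg) :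
    MNProv Ax (A.imp B) := by
  have t : MNProv Ax (A.neg.imp (A.imp B)) := by
    apply prv_taut; intro val hv
    simp only [Fml.neg, hv.2, hv.1]
    cases val A <;> cases val B <;> rfl
  exact t.mp h

/-- literal of `B` according to a set `S`. -/
def lit (S : Finset Fml) (B : Fml) : Fml := if B ∈ S then B else B.neg

/-- The characteristic conjunction of `S` over `Sg`. -/
noncomputable def chi (Sg S : Finset Fml) : Fml := (Sg.toList.map (lit S)).foldr Fml.and Fml.top

lemma val_lit {val : Val} (h : Resp val) (S : Finset Fml) (B : Fml) :
    (val (lit S B) = true) ↔ (val B = decide (B ∈ S)) := by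
  by_cases hB : B ∈ S <;> simp [lit, hB, h.neg]

lemma val_chi {val : Val} (h : Resp val) (Sg S : Finset Fml) :
    val (chi Sg S) = true ↔ ∀ B ∈ Sg, val B = decide (B ∈ S) := by
  have key : ∀ l : List Fml,
      (val ((l.map (lit S)).foldr Fml.and Fml.top) = true ↔
        ∀ B ∈ l, val B = decide (B ∈ S)) := by
    intro l; induction l with
    | nil => simp [h.top_]
    | cons B l ih =>
        simp only [List.map_cons, List.foldr_cons, h.and_, Bool.and_eq_true, ih,
          List.mem_cons]
        rw [val_lit h]
        constructor
        · rintro ⟨h1, h2⟩ C (rfl | hC)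
          · exact h1
          · exact h2 _ hC
        · intro hall
          exact ⟨hall B (Or.inl rfl), fun C hC => hall C (Or.inr hC)⟩
  rw [chi, key Sg.toList]
  simp [Finset.mem_toList]

lemma mp_chain {Ax : Fml → Prop} {G : Fml} :
    ∀ l : List Fml, (∀ E ∈ l, MNProv Ax E) →
      MNProv Ax (l.foldr Fml.imp G) → MNProv Ax G := by
  intro l
  induction l with
  | nil => intro _ h; exact h
  | cons E l ih =>
      intro hl hc
      exact ih (fun E' hE' => hl E' (List.mem_cons_of_mem _ hE'))
        (hc.mp (hl E List.mem_cons_self))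

lemma val_fold_imp {val : Val} (h : Resp val) (G : Fml) :
    ∀ l : List Fml,
      (val (l.foldr Fml.imp G) = true ↔ ((∀ E ∈ l, val E = true) → val G = true)) := by
  intro l; induction l with
  | nil => simp
  | cons E l ih =>
      simp only [List.foldr_cons, h.2, Bool.or_eq_true, Bool.not_eq_true', ih,
        List.mem_cons]
      constructor
      · rintro (hE | hrest) hall
        · rw [hall E (Or.inl rfl)] at hE; cases hE
        · exact hrest fun E' hE' => hall E' (Or.inr hE')
      · intro hh
        by_cases hE : val E = true
        · right; intro hall; exact hh (by rintro E' (rfl | hE'); exact hE; exact hall _ hE')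
        · left; cases hEv : val E
          · rfl
          · exact absurd hEv hE

/-- Inconsistency of `S` derived from theorems `l` contradicting the atom values on `S`. -/
lemma incons_of_thms {Ax : Fml → Prop} (Sg S : Finset Fml) (l : List Fml)
    (hl : ∀ E ∈ l, MNProv Ax E)
    (h : ∀ val : Val, Resp val → (∀ B ∈ Sg, val B = decide (B ∈ S)) →
      (∀ E ∈ l, val E = true) → False) :
    MNProv Ax (chi Sg S).neg := by
  apply mp_chain l hl
  apply prv_taut
  intro val hv
  rw [val_fold_imp hv]
  intro hall
  rw [hv.neg, Bool.not_eq_true']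
  by_contra hchi
  rw [Bool.not_eq_false] at hchi
  exact h val hv ((val_chi hv Sg S).mp hchi) hall

end S18

namespace S18

open Fml

/-- Case analysis over all subsets of `Sg`. -/
lemma bigCase {Ax : Fml → Prop} (Sg : Finset Fml) (G : Fml)
    (h : ∀ S ⊆ Sg, MNProv Ax ((chi Sg S).imp G)) : MNProv Ax G := by
  apply mp_chain (Sg.powerset.toList.map fun S => (chi Sg S).imp G)
  · intro E hE
    rw [List.mem_map] at hE
    obtain ⟨S, hS, rfl⟩ := hE
    exact h S (Finset.mem_powerset.mp (Finset.mem_toList.mp hS))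
  · apply prv_taut
    intro val hv
    rw [val_fold_imp hv]
    intro hall
    set S : Finset Fml := Sg.filter (fun B => val B = true) with hSdef
    have hSmem : ((chi Sg S).imp G) ∈ Sg.powerset.toList.map fun S => (chi Sg S).imp G := by
      apply List.mem_map_of_mem
      rw [Finset.mem_toList, Finset.mem_powerset]
      exact Finset.filter_subset _ _
    have h1 := hall _ hSmem
    rw [hv.2, Bool.or_eq_true, Bool.not_eq_true'] at h1
    rcases h1 with h1 | h1
    · exfalso
      rw [← Bool.not_eq_true, val_chi hv] at h1
      apply h1
      intro B hB
      simp only [hSdef, Finset.mem_filter, hB, true_and]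
      cases hvB : val B <;> simp [hvB]
    · exact h1

/-- `S` is consistent (over `Sg`) relative to the logic `Ax`. -/
def Cons (Ax : Fml → Prop) (Sg S : Finset Fml) : Prop := ¬ MNProv Ax (chi Sg S).neg

/-- Propositional completeness over consistent valuations. -/
lemma pcCore {Ax : Fml → Prop} (Sg : Finset Fml) (G : Fml)
    (hsem : ∀ S ⊆ Sg, Cons Ax Sg S → ∀ val : Val, Resp val →
      (∀ B ∈ Sg, val B = decide (B ∈ S)) → val G = true) : MNProv Ax G := by
  apply bigCase Sg
  intro S hS
  by_cases hc : Cons Ax Sg S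
  · apply prv_taut
    intro val hv
    rw [hv.2, Bool.or_eq_true, Bool.not_eq_true']
    cases hchi : val (chi Sg S)
    · exact Or.inl rfl
    · exact Or.inr (hsem S hS hc val hv ((val_chi hv Sg S).mp hchi))
  · exact imp_of_neg (not_not.mp hc)

end S18

namespace S18

open Fml

/-- Subformulas. -/
def sf : Fml → Finset Fml
  | .var n => {.var n}
  | .bot => {.bot}
  | .imp A B => insert (Fml.imp A B) (sf A ∪ sf B)
  | .box A => insert (Fml.box A) (sf A)

lemma self_mem_sf (A : Fml) : A ∈ sf A := by
  cases A <;> simp [sf]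

lemma sf_closed : ∀ {B C : Fml}, B ∈ sf C → sf B ⊆ sf C := by
  intro B C
  induction C with
  | var n => intro h; simp [sf] at h; subst h; exact subset_rfl
  | bot => intro h; simp [sf] at h; subst h; exact subset_rfl
  | imp C D ihC ihD =>
      intro h
      rw [sf, Finset.mem_insert, Finset.mem_union] at h
      rcases h with rfl | h | h
      · exact subset_rfl
      · exact (ihC h).trans (show sf C ⊆ sf (Fml.imp C D) from fun x hx =>
          Finset.mem_insert_of_mem (Finset.mem_union_left _ hx))
      · exact (ihD h).trans (show sf D ⊆ sf (Fml.imp C D) from fun x hx =>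
          Finset.mem_insert_of_mem (Finset.mem_union_right _ hx))
  | box C ihC =>
      intro h
      rw [sf, Finset.mem_insert] at h
      rcases h with rfl | h
      · exact subset_rfl
      · exact (ihC h).trans (show sf C ⊆ sf (Fml.box C) from fun x hx =>
          Finset.mem_insert_of_mem hx)

/-- The finite set of relevant formulas: subformulas of `A` plus `□⊥`, `⊥`. -/
def SIG (A : Fml) : Finset Fml := sf A ∪ sf (Fml.box Fml.bot)

lemma A_mem_SIG (A : Fml) : A ∈ SIG A :=
  Finset.mem_union_left _ (self_mem_sf A)

lemma boxbot_mem_SIG (A : Fml) : Fml.box Fml.bot ∈ SIG A :=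
  Finset.mem_union_right _ (self_mem_sf _)

lemma SIG_closed {A B : Fml} (h : B ∈ SIG A) : sf B ⊆ SIG A := by
  rcases Finset.mem_union.mp h with h | h
  · exact (sf_closed h).trans (Finset.subset_union_left)
  · exact (sf_closed h).trans (Finset.subset_union_right)

lemma imp_mem_SIG {A B C : Fml} (h : Fml.imp B C ∈ SIG A) :
    B ∈ SIG A ∧ C ∈ SIG A := by
  have hs := SIG_closed h
  constructor
  · exact hs (show B ∈ sf (Fml.imp B C) from Finset.mem_insert_of_mem
      (Finset.mem_union_left _ (self_mem_sf B)))
  · exact hs (show C ∈ sf (Fml.imp B C) from Finset.mem_insert_of_mem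
      (Finset.mem_union_right _ (self_mem_sf C)))

lemma box_mem_SIG {A B : Fml} (h : Fml.box B ∈ SIG A) : B ∈ SIG A :=
  SIG_closed h (show B ∈ sf (Fml.box B) from Finset.mem_insert_of_mem (self_mem_sf B))

/-- Worlds: consistent subsets of `SIG A`. -/
def Wld (Ax : Fml → Prop) (A : Fml) : Type :=
  {S : Finset Fml // S ⊆ SIG A ∧ Cons Ax (SIG A) S}

instance (Ax : Fml → Prop) (A : Fml) : Finite (Wld Ax A) := by
  apply Finite.of_injective
    (fun x : Wld Ax A => (⟨x.1, Finset.mem_powerset.mpr x.2.1⟩ : {T // T ∈ (SIG A).powerset}))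
  intro x y h
  exact Subtype.ext (congrArg Subtype.val h :)

/-- The canonical satisfaction relation. -/
def SatF {W : Type} (F : MNFrame W) (v : W → ℕ → Prop) : Fml → W → Prop
  | .var n, x => v x n
  | .bot, _ => False
  | .imp B C, x => SatF F v B x → SatF F v C x
  | .box B, x => ∀ V : Set W, F.rel x V → ∃ y ∈ V, SatF F v B y

lemma isSat_SatF {W : Type} (F : MNFrame W) (v : W → ℕ → Prop) :
    IsSat F (fun x B => SatF F v B x) :=
  ⟨fun _ h => h, fun _ _ _ => Iff.rfl, fun _ _ => Iff.rfl⟩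

end S18

namespace S18

open Fml

variable {Ax : Fml → Prop} {A : Fml}

/-- Default valuation on worlds. -/
def wval (x : Wld Ax A) (n : ℕ) : Prop := Fml.var n ∈ x.1

lemma world_incons (x : Wld Ax A) (l : List Fml)
    (hl : ∀ E ∈ l, MNProv Ax E)
    (h : ∀ val : Val, Resp val → (∀ B ∈ SIG A, val B = decide (B ∈ x.1)) →
      (∀ E ∈ l, val E = true) → False) : False :=
  x.2.2 (incons_of_thms (SIG A) x.1 l hl h)

/-- Truth lemma. -/
lemma truth_lemma (F : MNFrame (Wld Ax A))
    (hTP1 : ∀ (x : Wld Ax A) (V : Set (Wld Ax A)), F.rel x V →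
      ∀ B : Fml, Fml.box B ∈ SIG A → Fml.box B ∈ x.1 → ∃ y ∈ V, B ∈ y.1)
    (hTP2 : ∀ (x : Wld Ax A) (B : Fml), Fml.box B ∈ SIG A → Fml.box B ∉ x.1 →
      F.rel x {y : Wld Ax A | B ∉ y.1}) :
    ∀ B : Fml, B ∈ SIG A → ∀ x : Wld Ax A, (SatF F (wval) B x ↔ B ∈ x.1) := by
  intro B
  induction B with
  | var n => intro _ x; exact Iff.rfl
  | bot =>
      intro hB x
      simp only [SatF, false_iff]
      intro hbot
      exact world_incons x [] (by simp) (by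
        intro val hv hatoms _
        have h1 := hatoms _ hB
        rw [hv.1] at h1
        simp [hbot] at h1)
  | imp B C ihB ihC =>
      intro hBC x
      obtain ⟨hB, hC⟩ := imp_mem_SIG hBC
      simp only [SatF]
      rw [ihB hB x, ihC hC x]
      constructor
      · intro h
        by_contra hmem
        by_cases hBx : B ∈ x.1
        · have hCx := h hBx
          exact world_incons x [] (by simp) (by
            intro val hv hatoms _
            have h1 := hatoms _ hBC
            rw [hv.2] at h1
            rw [hatoms _ hB, hatoms _ hC] at h1
            simp [hBx, hCx, hmem] at h1)
        · exact world_incons x [] (by simp) (by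
            intro val hv hatoms _
            have h1 := hatoms _ hBC
            rw [hv.2, hatoms _ hB, hatoms _ hC] at h1
            simp [hBx, hmem] at h1)
      · intro hmem hBx
        by_contra hCx
        exact world_incons x [] (by simp) (by
          intro val hv hatoms _
          have h1 := hatoms _ hBC
          rw [hv.2, hatoms _ hB, hatoms _ hC] at h1
          simp [hBx, hCx, hmem] at h1)
  | box B ihB =>
      intro hB x
      have hBm : B ∈ SIG A := box_mem_SIG hB
      constructor
      · intro hs
        by_contra hbox
        obtain ⟨y, hy, hsat⟩ := hs _ (hTP2 x B hB hbox)
        exact hy ((ihB hBm y).mp hsat)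
      · intro hmem V hrel
        obtain ⟨y, hy, hmemy⟩ := hTP1 x V hrel B hB hmem
        exact ⟨y, hy, (ihB hBm y).mpr hmemy⟩

/-- Existence of a world omitting a non-theorem. -/
lemma exists_world (hA : ¬ MNProv Ax A) :
    ∃ S : Finset Fml, S ⊆ SIG A ∧ Cons Ax (SIG A) S ∧ A ∉ S := by
  by_contra h
  push_neg at h
  apply hA
  apply pcCore (SIG A)
  intro S hS hc val hv hatoms
  have hmem := h S hS hc
  rw [hatoms _ (A_mem_SIG A)]
  simp [hmem]

/-- The main engine: any frame on the canonical worlds satisfying TP1+TP2 refutes A. -/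
lemma main (hA : ¬ MNProv Ax A) (F : MNFrame (Wld Ax A))
    (hTP1 : ∀ (x : Wld Ax A) (V : Set (Wld Ax A)), F.rel x V →
      ∀ B : Fml, Fml.box B ∈ SIG A → Fml.box B ∈ x.1 → ∃ y ∈ V, B ∈ y.1)
    (hTP2 : ∀ (x : Wld Ax A) (B : Fml), Fml.box B ∈ SIG A → Fml.box B ∉ x.1 →
      F.rel x {y : Wld Ax A | B ∉ y.1}) :
    ∃ (Sat : Wld Ax A → Fml → Prop) (_ : IsSat F Sat) (x : Wld Ax A), ¬ Sat x A := by
  obtain ⟨S, hS, hc, hAS⟩ := exists_world hA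
  refine ⟨fun x B => SatF F wval B x, isSat_SatF F wval, ⟨S, hS, hc⟩, ?_⟩
  show ¬ SatF F wval A ⟨S, hS, hc⟩
  refine mt (truth_lemma F hTP1 hTP2 A (A_mem_SIG A) ⟨S, hS, hc⟩).mp ?_
  exact hAS

end S18

namespace S18

open Fml

variable {Ax : Fml → Prop} {A : Fml}

/-- The basic canonical relation. -/
def relM (x : Wld Ax A) (V : Set (Wld Ax A)) : Prop :=
  V.Nonempty ∧ ∀ B : Fml, Fml.box B ∈ SIG A → Fml.box B ∈ x.1 → ∃ y ∈ V, B ∈ y.1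

/-- The canonical relation for transitive logics. -/
def relF (x : Wld Ax A) (V : Set (Wld Ax A)) : Prop :=
  V.Nonempty ∧ (∃ B : Fml, Fml.box B ∈ SIG A ∧ Fml.box B ∉ x.1) ∧
    ∀ B : Fml, Fml.box B ∈ SIG A → Fml.box B ∈ x.1 →
      (∃ y ∈ V, B ∈ y.1) ∧ (∃ y ∈ V, Fml.box B ∈ y.1)

def frameM (hne : Nonempty (Wld Ax A)) : MNFrame (Wld Ax A) where
  nonempty := hne
  rel := relM
  rel_nonempty := fun _ _ h => h.1
  mono := fun x V U h hVU =>
    ⟨h.1.mono hVU, fun B hB hBx => (h.2 B hB hBx).imp fun y ⟨hy, hm⟩ => ⟨hVU hy, hm⟩⟩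

def frameF (hne : Nonempty (Wld Ax A)) : MNFrame (Wld Ax A) where
  nonempty := hne
  rel := relF
  rel_nonempty := fun _ _ h => h.1
  mono := fun x V U h hVU =>
    ⟨h.1.mono hVU, h.2.1, fun B hB hBx =>
      ⟨(h.2.2 B hB hBx).1.imp fun y ⟨hy, hm⟩ => ⟨hVU hy, hm⟩,
       (h.2.2 B hB hBx).2.imp fun y ⟨hy, hm⟩ => ⟨hVU hy, hm⟩⟩⟩

/-- Not every world contains B, given some world has ¬□B. -/
lemma exists_not_mem {x : Wld Ax A} {B : Fml} (hB : Fml.box B ∈ SIG A)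
    (hBm : B ∈ SIG A) (hbox : Fml.box B ∉ x.1) :
    ∃ y : Wld Ax A, B ∉ y.1 := by
  by_contra hall
  push_neg at hall
  have hth : MNProv Ax B := by
    apply pcCore (SIG A)
    intro S hS hc val hv hatoms
    rw [hatoms _ hBm]
    simp [hall ⟨S, hS, hc⟩]
  exact world_incons x [Fml.box B] (by simpa using hth.nec) (by
    intro val hv hatoms hl
    have h1 := hatoms _ hB
    have h2 := hl (Fml.box B) (by simp)
    rw [h2] at h1
    simp [hbox] at h1)

/-- If □C ∈ x and □B ∉ x then some world has D but not B, provided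
`D.imp B` syntactically yields `□C.imp □B`. -/
lemma exists_sep {x : Wld Ax A} {B D C : Fml} (hB : Fml.box B ∈ SIG A)
    (hBm : B ∈ SIG A) (hDm : D ∈ SIG A) (hbox : Fml.box B ∉ x.1)
    (hthm : MNProv Ax (D.imp B) → MNProv Ax ((C.box).imp (B.box)))
    (hC : Fml.box C ∈ SIG A) (hCx : Fml.box C ∈ x.1) :
    ∃ y : Wld Ax A, B ∉ y.1 ∧ D ∈ y.1 := by
  by_contra hall
  push_neg at hall
  have himp : MNProv Ax (D.imp B) := by
    apply pcCore (SIG A)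
    intro S hS hc val hv hatoms
    rw [hv.2, hatoms _ hBm, hatoms _ hDm]
    by_cases hDS : D ∈ S
    · have := hall ⟨S, hS, hc⟩
      by_cases hBS : B ∈ S
      · simp [hBS, hDS]
      · exact absurd hDS (this hBS)
    · simp [hDS]
  exact world_incons x [(C.box).imp (B.box)] (by simpa using hthm himp) (by
    intro val hv hatoms hl
    have h1 := hl ((C.box).imp (B.box)) (List.mem_singleton_self _)
    rw [hv.2, hatoms _ hB, hatoms _ hC] at h1
    simp [hbox, hCx] at h1)

lemma relM_TP2 (x : Wld Ax A) (B : Fml) (hB : Fml.box B ∈ SIG A)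
    (hbox : Fml.box B ∉ x.1) : relM x {y : Wld Ax A | B ∉ y.1} := by
  have hBm : B ∈ SIG A := box_mem_SIG hB
  constructor
  · obtain ⟨y, hy⟩ := exists_not_mem hB hBm hbox
    exact ⟨y, hy⟩
  · intro C hC hCx
    obtain ⟨y, h1, h2⟩ := exists_sep hB hBm (box_mem_SIG hC) hbox
      (fun h => MNProv.rm h) hC hCx
    exact ⟨y, h1, h2⟩

lemma relF_TP2 (h4 : ∀ B : Fml, MNProv Ax (B.box.imp B.box.box))
    (x : Wld Ax A) (B : Fml) (hB : Fml.box B ∈ SIG A)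
    (hbox : Fml.box B ∉ x.1) : relF x {y : Wld Ax A | B ∉ y.1} := by
  have hBm : B ∈ SIG A := box_mem_SIG hB
  refine ⟨?_, ⟨B, hB, hbox⟩, ?_⟩
  · obtain ⟨y, hy⟩ := exists_not_mem hB hBm hbox
    exact ⟨y, hy⟩
  · intro C hC hCx
    constructor
    · obtain ⟨y, h1, h2⟩ := exists_sep hB hBm (box_mem_SIG hC) hbox
        (fun h => MNProv.rm h) hC hCx
      exact ⟨y, h1, h2⟩
    · obtain ⟨y, h1, h2⟩ := exists_sep hB hBm hC hbox
        (fun h => imp_trans (h4 C) (MNProv.rm h)) hC hCx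
      exact ⟨y, h1, h2⟩

lemma relF_trans (hne : Nonempty (Wld Ax A)) : (frameF (Ax := Ax) hne).IsTransitive := by
  intro x V U hV hU
  obtain ⟨⟨y0, hy0⟩, hnb, hwit⟩ := hV
  refine ⟨?_, hnb, ?_⟩
  · obtain ⟨z, hz⟩ := (hU y0 hy0).1
    exact ⟨z, Set.mem_biUnion hy0 hz⟩
  · intro B hB hBx
    obtain ⟨y, hy, hmy⟩ := (hwit B hB hBx).2
    obtain ⟨h1, h2⟩ := (hU y hy).2.2 B hB hmy
    constructor
    · obtain ⟨z, hz, hmz⟩ := h1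
      exact ⟨z, Set.mem_biUnion hy hz, hmz⟩
    · obtain ⟨z, hz, hmz⟩ := h2
      exact ⟨z, Set.mem_biUnion hy hz, hmz⟩

end S18

namespace S18

open Fml

variable {Ax : Fml → Prop} {A : Fml}

lemma prv_neg_of_all {B : Fml} (hBm : B ∈ SIG A)
    (hall : ∀ y : Wld Ax A, B ∉ y.1) : MNProv Ax B.neg := by
  apply pcCore (SIG A)
  intro S hS hc val hv hatoms
  rw [hv.neg, hatoms _ hBm]
  simp [hall ⟨S, hS, hc⟩]

lemma prv_sep_of_all {D₁ D₂ : Fml} (h1 : D₁ ∈ SIG A) (h2 : D₂ ∈ SIG A)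
    (hall : ∀ y : Wld Ax A, D₁ ∈ y.1 → D₂ ∉ y.1) :
    MNProv Ax (D₁.imp D₂.neg) := by
  apply pcCore (SIG A)
  intro S hS hc val hv hatoms
  rw [hv.2, hv.neg, hatoms _ h1, hatoms _ h2]
  by_cases hd1 : D₁ ∈ S
  · simp [hd1, hall ⟨S, hS, hc⟩ hd1]
  · simp [hd1]

/-- Every world contains some boxed Σ-formula in x: ∃ y with □B ∈ y, if □B ∈ x. -/
lemma exists_boxmem {x : Wld Ax A} {B : Fml} (hB : Fml.box B ∈ SIG A)
    (hBx : Fml.box B ∈ x.1) : ∃ y : Wld Ax A, Fml.box B ∈ y.1 := by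
  by_contra hall
  push_neg at hall
  exact world_incons x [(B.box).neg] (by simpa using prv_neg_of_all hB hall) (by
    intro val hv hatoms hl
    have h1 := hl ((B.box).neg) (List.mem_singleton_self _)
    rw [hv.neg, hatoms _ hB] at h1
    simp [hBx] at h1)

/-- In logics with P: if □B ∈ x then some world contains B. -/
lemma exists_mem_of_P (hP : MNProv Ax (Fml.bot.box).neg)
    {x : Wld Ax A} {B : Fml} (hB : Fml.box B ∈ SIG A)
    (hBx : Fml.box B ∈ x.1) : ∃ y : Wld Ax A, B ∈ y.1 := by
  by_contra hall
  push_neg at hall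
  have hneg : MNProv Ax (B.imp Fml.bot) := prv_neg_of_all (box_mem_SIG hB) hall
  exact world_incons x [(B.box).imp (Fml.bot.box), (Fml.bot.box).neg]
    (by
      intro E hE
      rcases List.mem_cons.mp hE with rfl | hE
      · exact hneg.rm
      · rcases List.mem_cons.mp hE with rfl | hE
        · exact hP
        · cases hE)
    (by
      intro val hv hatoms hl
      have h1 := hl ((B.box).imp (Fml.bot.box)) (by simp)
      have h2 := hl ((Fml.bot.box).neg) (by simp)
      rw [hv.2, hatoms _ hB] at h1
      rw [hv.neg] at h2
      simp [hBx] at h1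
      rw [h1] at h2
      cases h2)

/-- In logics with D: from □B,□C ∈ x, ⊢ □B → □¬D and ⊢ □C → □D, contradiction. -/
lemma boxes_contra_D (hD : ∀ B : Fml, MNProv Ax (((B.box).and (B.neg.box)).neg))
    {x : Wld Ax A} {B C D₂ : Fml} (hB : Fml.box B ∈ SIG A) (hBx : Fml.box B ∈ x.1)
    (hC : Fml.box C ∈ SIG A) (hCx : Fml.box C ∈ x.1)
    (e1 : MNProv Ax ((B.box).imp ((D₂.neg).box)))
    (e2 : MNProv Ax ((C.box).imp (D₂.box))) : False := by
  refine world_incons x [(B.box).imp ((D₂.neg).box), (C.box).imp (D₂.box),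
    ((D₂.box).and ((D₂.neg).box)).neg] ?_ ?_
  · intro E hE
    rcases List.mem_cons.mp hE with rfl | hE
    · exact e1
    · rcases List.mem_cons.mp hE with rfl | hE
      · exact e2
      · rcases List.mem_cons.mp hE with rfl | hE
        · exact hD D₂
        · cases hE
  · intro val hv hatoms hl
    have h1 := hl ((B.box).imp ((D₂.neg).box)) (by simp)
    have h2 := hl ((C.box).imp (D₂.box)) (by simp)
    have h3 := hl (((D₂.box).and ((D₂.neg).box)).neg) (by simp)
    rw [hv.2, hatoms _ hB] at h1
    rw [hv.2, hatoms _ hC] at h2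
    rw [hv.neg, hv.and_] at h3
    simp [hBx] at h1
    simp [hCx] at h2
    rw [h1, h2] at h3
    cases h3

/-- In logics with D: if □B ∈ x then some world contains B. -/
lemma exists_mem_of_D (hD : ∀ B : Fml, MNProv Ax (((B.box).and (B.neg.box)).neg))
    {x : Wld Ax A} {B : Fml} (hB : Fml.box B ∈ SIG A)
    (hBx : Fml.box B ∈ x.1) : ∃ y : Wld Ax A, B ∈ y.1 := by
  by_contra hall
  push_neg at hall
  have hneg : MNProv Ax B.neg := prv_neg_of_all (box_mem_SIG hB) hall
  refine world_incons x [(B.neg).box, ((B.box).and ((B.neg).box)).neg] ?_ ?_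
  · intro E hE
    rcases List.mem_cons.mp hE with rfl | hE
    · exact hneg.nec
    · rcases List.mem_cons.mp hE with rfl | hE
      · exact hD B
      · cases hE
  · intro val hv hatoms hl
    have h1 := hl ((B.neg).box) (by simp)
    have h2 := hl (((B.box).and ((B.neg).box)).neg) (by simp)
    rw [hv.neg, hv.and_, hatoms _ hB] at h2
    simp [hBx] at h2
    rw [h1] at h2
    cases h2

/-- In logics with P: □⊥ is in no world. -/
lemma not_boxbot_P (hP : MNProv Ax (Fml.bot.box).neg) (x : Wld Ax A) :
    Fml.box Fml.bot ∉ x.1 := by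
  intro hmem
  exact world_incons x [(Fml.bot.box).neg] (by simpa using hP) (by
    intro val hv hatoms hl
    have h1 := hl ((Fml.bot.box).neg) (by simp)
    rw [hv.neg, hatoms _ (boxbot_mem_SIG A)] at h1
    simp [hmem] at h1)

/-- In logics with D: □⊥ is in no world. -/
lemma not_boxbot_D (hD : ∀ B : Fml, MNProv Ax (((B.box).and (B.neg.box)).neg))
    (x : Wld Ax A) : Fml.box Fml.bot ∉ x.1 := by
  intro hmem
  have hnb : MNProv Ax (Fml.bot.neg) := prv_taut (fun val hv => by
    rw [hv.neg, hv.1]; rfl)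
  have hnecnb : MNProv Ax ((Fml.bot.neg).box) := hnb.nec
  have e1 : MNProv Ax ((Fml.bot.box).imp ((Fml.bot.neg).box)) := by
    have t : MNProv Ax (((Fml.bot.neg).box).imp ((Fml.bot.box).imp ((Fml.bot.neg).box))) := by
      apply prv_taut
      intro val hv
      rw [hv.2, hv.2]
      cases val ((Fml.bot.neg).box) <;> cases val (Fml.bot.box) <;> rfl
    exact t.mp hnecnb
  exact boxes_contra_D hD (boxbot_mem_SIG A) hmem (boxbot_mem_SIG A) hmem e1
    (prv_imp_self _)

end S18

namespace S18

open Fml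

variable {Ax : Fml → Prop} {A : Fml}

lemma frameM_TP1 (hne : Nonempty (Wld Ax A)) :
    ∀ (x : Wld Ax A) (V : Set (Wld Ax A)), (frameM hne).rel x V →
      ∀ B : Fml, Fml.box B ∈ SIG A → Fml.box B ∈ x.1 → ∃ y ∈ V, B ∈ y.1 :=
  fun _ _ h => h.2

lemma frameF_TP1 (hne : Nonempty (Wld Ax A)) :
    ∀ (x : Wld Ax A) (V : Set (Wld Ax A)), (frameF hne).rel x V →
      ∀ B : Fml, Fml.box B ∈ SIG A → Fml.box B ∈ x.1 → ∃ y ∈ V, B ∈ y.1 :=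
  fun _ _ h B hB hBx => (h.2.2 B hB hBx).1

lemma frameM_MNP (hP : MNProv Ax (Fml.bot.box).neg) (hne : Nonempty (Wld Ax A)) :
    (frameM hne).IsMNP := by
  intro x
  refine ⟨Set.univ, ⟨x, trivial⟩, fun B hB hBx => ?_⟩
  obtain ⟨y, hy⟩ := exists_mem_of_P hP hB hBx
  exact ⟨y, trivial, hy⟩

lemma frameF_MNP (hP : MNProv Ax (Fml.bot.box).neg) (hne : Nonempty (Wld Ax A)) :
    (frameF hne).IsMNP := by
  intro x
  refine ⟨Set.univ, ⟨x, trivial⟩, ⟨Fml.bot, boxbot_mem_SIG A, not_boxbot_P hP x⟩,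
    fun B hB hBx => ⟨?_, ?_⟩⟩
  · obtain ⟨y, hy⟩ := exists_mem_of_P hP hB hBx
    exact ⟨y, trivial, hy⟩
  · obtain ⟨y, hy⟩ := exists_boxmem hB hBx
    exact ⟨y, trivial, hy⟩

lemma frameM_MND (hD : ∀ B : Fml, MNProv Ax (((B.box).and (B.neg.box)).neg))
    (hne : Nonempty (Wld Ax A)) : (frameM hne).IsMND := by
  intro x V
  by_cases h1 : relM x V
  · exact Or.inl h1
  · right
    rw [relM, not_and_or] at h1
    rcases h1 with h1 | h1
    · -- V is empty, so Vᶜ = univ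
      rw [Set.not_nonempty_iff_eq_empty] at h1
      subst h1
      rw [Set.compl_empty]
      refine ⟨⟨x, trivial⟩, fun B hB hBx => ?_⟩
      obtain ⟨y, hy⟩ := exists_mem_of_D hD hB hBx
      exact ⟨y, trivial, hy⟩
    · push_neg at h1
      obtain ⟨B, hB, hBx, hBV⟩ := h1
      -- every world in V omits B
      refine ⟨?_, fun C hC hCx => ?_⟩
      · -- Vᶜ nonempty : else V = univ and B in no world, contra exists_mem_of_D
        by_contra hVc
        rw [Set.not_nonempty_iff_eq_empty, Set.compl_empty_iff] at hVc
        subst hVc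
        obtain ⟨y, hy⟩ := exists_mem_of_D hD hB hBx
        exact hBV y trivial hy
      · by_contra hCV
        push_neg at hCV
        have hall : ∀ y : Wld Ax A, B ∈ y.1 → C ∉ y.1 := by
          intro y hBy
          by_cases hyV : y ∈ V
          · exact absurd hBy (hBV y hyV)
          · exact hCV y hyV
        exact boxes_contra_D hD hB hBx hC hCx
          ((prv_sep_of_all (box_mem_SIG hB) (box_mem_SIG hC) hall).rm)
          (prv_imp_self _)

lemma frameF_MND (hD : ∀ B : Fml, MNProv Ax (((B.box).and (B.neg.box)).neg))
    (h4 : ∀ B : Fml, MNProv Ax (B.box.imp B.box.box))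
    (hne : Nonempty (Wld Ax A)) : (frameF hne).IsMND := by
  intro x V
  have hnb : ∃ B : Fml, Fml.box B ∈ SIG A ∧ Fml.box B ∉ x.1 :=
    ⟨Fml.bot, boxbot_mem_SIG A, not_boxbot_D hD x⟩
  have huniv : relF x (Set.univ : Set (Wld Ax A)) := by
    refine ⟨⟨x, trivial⟩, hnb, fun B hB hBx => ⟨?_, ?_⟩⟩
    · obtain ⟨y, hy⟩ := exists_mem_of_D hD hB hBx
      exact ⟨y, trivial, hy⟩
    · obtain ⟨y, hy⟩ := exists_boxmem hB hBx
      exact ⟨y, trivial, hy⟩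
  by_cases h1 : relF x V
  · exact Or.inl h1
  · right
    by_cases hV : V.Nonempty
    · by_cases hVc : Vᶜ.Nonempty
      · -- both nonempty; show relF x Vᶜ
        rw [relF, not_and_or, not_and_or] at h1
        rcases h1 with h1 | h1 | h1
        · exact absurd hV h1
        · exact absurd hnb h1
        · push_neg at h1
          obtain ⟨B, hB, hBx, hfail1⟩ := h1
          refine ⟨hVc, hnb, fun C hC hCx => ?_⟩
          by_contra hfail2
          have key : ∀ D₁ D₂ : Fml, D₁ ∈ SIG A → D₂ ∈ SIG A →
              MNProv Ax ((B.box).imp (D₁.box)) → MNProv Ax ((C.box).imp (D₂.box)) →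
              (∀ y ∈ V, D₁ ∉ y.1) → (∀ y ∈ Vᶜ, D₂ ∉ y.1) → False := by
            intro D₁ D₂ h1m h2m l1 l2 hV1 hV2
            have hall : ∀ y : Wld Ax A, D₁ ∈ y.1 → D₂ ∉ y.1 := fun y hy => by
              by_cases hyV : y ∈ V
              · exact absurd hy (hV1 y hyV)
              · exact hV2 y hyV
            exact boxes_contra_D hD hB hBx hC hCx
              (imp_trans l1 ((prv_sep_of_all h1m h2m hall).rm)) l2
          have hBm := box_mem_SIG hB
          have hCm := box_mem_SIG hC
          have hf1 : (∀ y ∈ V, B ∉ y.1) ∨ (∀ y ∈ V, Fml.box B ∉ y.1) := by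
            by_cases hex : ∃ y ∈ V, B ∈ y.1
            · exact Or.inr (hfail1 hex)
            · push_neg at hex; exact Or.inl hex
          have hf2 : (∀ y ∈ Vᶜ, C ∉ y.1) ∨ (∀ y ∈ Vᶜ, Fml.box C ∉ y.1) := by
            rw [not_and_or] at hfail2
            rcases hfail2 with h | h
            · push_neg at h; exact Or.inl h
            · push_neg at h; exact Or.inr h
          rcases hf1 with hf1 | hf1 <;> rcases hf2 with hf2 | hf2
          · exact key B C hBm hCm (prv_imp_self _) (prv_imp_self _) hf1 hf2
          · exact key B (C.box) hBm hC (prv_imp_self _) (h4 C) hf1 hf2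
          · exact key (B.box) C hB hCm (h4 B) (prv_imp_self _) hf1 hf2
          · exact key (B.box) (C.box) hB hC (h4 B) (h4 C) hf1 hf2
      · rw [Set.not_nonempty_iff_eq_empty, Set.compl_empty_iff] at hVc
        exfalso
        exact h1 (hVc ▸ huniv)
    · rw [Set.not_nonempty_iff_eq_empty] at hV
      subst hV
      rw [Set.compl_empty]
      exact huniv

end S18

namespace S18

open Fml

/-- Generic refutation package for the basic relation. -/
lemma refuteM {Ax : Fml → Prop} {A : Fml} (hA : ¬ MNProv Ax A) :
    ∃ (hne : Nonempty (Wld Ax A)) (Sat : Wld Ax A → Fml → Prop)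
      (_ : IsSat (frameM hne) Sat) (x : Wld Ax A), ¬ Sat x A := by
  obtain ⟨S, hS, hc, hAS⟩ := exists_world hA
  have hne : Nonempty (Wld Ax A) := ⟨⟨S, hS, hc⟩⟩
  obtain ⟨Sat, hSat, x, hx⟩ := main hA (frameM hne) (frameM_TP1 hne)
    (fun x B hB hbox => relM_TP2 x B hB hbox)
  exact ⟨hne, Sat, hSat, x, hx⟩

/-- Generic refutation package for the transitive relation. -/
lemma refuteF {Ax : Fml → Prop} {A : Fml}
    (h4 : ∀ B : Fml, MNProv Ax (B.box.imp B.box.box)) (hA : ¬ MNProv Ax A) :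
    ∃ (hne : Nonempty (Wld Ax A)) (Sat : Wld Ax A → Fml → Prop)
      (_ : IsSat (frameF hne) Sat) (x : Wld Ax A), ¬ Sat x A := by
  obtain ⟨S, hS, hc, hAS⟩ := exists_world hA
  have hne : Nonempty (Wld Ax A) := ⟨⟨S, hS, hc⟩⟩
  obtain ⟨Sat, hSat, x, hx⟩ := main hA (frameF hne) (frameF_TP1 hne)
    (fun x B hB hbox => relF_TP2 h4 x B hB hbox)
  exact ⟨hne, Sat, hSat, x, hx⟩

end S18

/-- For each L among MN, MNF, MNP, MND, MNPF, MNDF, if A is not a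
theorem of L then A is refuted at some world of some satisfaction relation on a
finite MN-frame of the corresponding frame class. -/
theorem stmt18 :
    (∀ A : Fml, ¬ MN A → ∃ (W : Type) (_ : Finite W) (F : MNFrame W)
      (Sat : W → Fml → Prop) (_ : IsSat F Sat) (x : W), ¬ Sat x A) ∧
    (∀ A : Fml, ¬ MNF A → ∃ (W : Type) (_ : Finite W) (F : MNFrame W)
      (_ : F.IsTransitive) (Sat : W → Fml → Prop) (_ : IsSat F Sat) (x : W), ¬ Sat x A) ∧
    (∀ A : Fml, ¬ MNP A → ∃ (W : Type) (_ : Finite W) (F : MNFrame W)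
      (_ : F.IsMNP) (Sat : W → Fml → Prop) (_ : IsSat F Sat) (x : W), ¬ Sat x A) ∧
    (∀ A : Fml, ¬ MND A → ∃ (W : Type) (_ : Finite W) (F : MNFrame W)
      (_ : F.IsMND) (Sat : W → Fml → Prop) (_ : IsSat F Sat) (x : W), ¬ Sat x A) ∧
    (∀ A : Fml, ¬ MNPF A → ∃ (W : Type) (_ : Finite W) (F : MNFrame W)
      (_ : F.IsTransitive) (_ : F.IsMNP) (Sat : W → Fml → Prop) (_ : IsSat F Sat)
      (x : W), ¬ Sat x A) ∧
    (∀ A : Fml, ¬ MNDF A → ∃ (W : Type) (_ : Finite W) (F : MNFrame W)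
      (_ : F.IsTransitive) (_ : F.IsMND) (Sat : W → Fml → Prop) (_ : IsSat F Sat)
      (x : W), ¬ Sat x A) := by
  refine ⟨?_, ?_, ?_, ?_, ?_, ?_⟩
  · -- MN
    intro A hA
    obtain ⟨hne, Sat, hSat, x, hx⟩ := S18.refuteM (Ax := fun _ => False) hA
    exact ⟨_, inferInstance, S18.frameM hne, Sat, hSat, x, hx⟩
  · -- MNF
    intro A hA
    have h4 : ∀ B : Fml, MNProv AxF (B.box.imp B.box.box) :=
      fun B => MNProv.ax ⟨B, rfl⟩
    obtain ⟨hne, Sat, hSat, x, hx⟩ := S18.refuteF h4 hA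
    exact ⟨_, inferInstance, S18.frameF hne, S18.relF_trans hne, Sat, hSat, x, hx⟩
  · -- MNP
    intro A hA
    have hP : MNProv AxP (Fml.bot.box).neg := MNProv.ax rfl
    obtain ⟨hne, Sat, hSat, x, hx⟩ := S18.refuteM hA
    exact ⟨_, inferInstance, S18.frameM hne, S18.frameM_MNP hP hne, Sat, hSat, x, hx⟩
  · -- MND
    intro A hA
    have hD : ∀ B : Fml, MNProv AxD (((B.box).and (B.neg.box)).neg) :=
      fun B => MNProv.ax ⟨B, rfl⟩
    obtain ⟨hne, Sat, hSat, x, hx⟩ := S18.refuteM hA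
    exact ⟨_, inferInstance, S18.frameM hne, S18.frameM_MND hD hne, Sat, hSat, x, hx⟩
  · -- MNPF
    intro A hA
    have hP : MNProv (fun A => AxP A ∨ AxF A) (Fml.bot.box).neg :=
      MNProv.ax (Or.inl rfl)
    have h4 : ∀ B : Fml, MNProv (fun A => AxP A ∨ AxF A) (B.box.imp B.box.box) :=
      fun B => MNProv.ax (Or.inr ⟨B, rfl⟩)
    obtain ⟨hne, Sat, hSat, x, hx⟩ := S18.refuteF h4 hA
    exact ⟨_, inferInstance, S18.frameF hne, S18.relF_trans hne,
      S18.frameF_MNP hP hne, Sat, hSat, x, hx⟩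
  · -- MNDF
    intro A hA
    have hD : ∀ B : Fml, MNProv (fun A => AxD A ∨ AxF A) (((B.box).and (B.neg.box)).neg) :=
      fun B => MNProv.ax (Or.inl ⟨B, rfl⟩)
    have h4 : ∀ B : Fml, MNProv (fun A => AxD A ∨ AxF A) (B.box.imp B.box.box) :=
      fun B => MNProv.ax (Or.inr ⟨B, rfl⟩)
    obtain ⟨hne, Sat, hSat, x, hx⟩ := S18.refuteF h4 hA
    exact ⟨_, inferInstance, S18.frameF hne, S18.relF_trans hne,
      S18.frameF_MND hD h4 hne, Sat, hSat, x, hx⟩
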